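/- Let G be a connected false-twin-free graph different from K₂. If u and v are two distinct vertices of degree one, then there is a biclique containing u but not v (i.e., the sets of bicliques containing u and v differ). -/

import Mathlib

/-- A set of vertices inducing a complete bipartite subgraph (both sides nonempty). -/
def IsCompleteBipartiteSet {V : Type*} (G : SimpleGraph V) (B : Set V) : Prop :=
  ∃ X Y : Set V, X.Nonempty ∧ Y.Nonempty ∧ Disjoint X Y ∧ B = X ∪ Y ∧
    (∀ x ∈ X, ∀ y ∈ Y, G.Adj x y) ∧
    (∀ x ∈ X, ∀ x' ∈ X, ¬ G.Adj x x') ∧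
    (∀ y ∈ Y, ∀ y' ∈ Y, ¬ G.Adj y y')

/-- A biclique: a maximal set of vertices inducing a complete bipartite subgraph. -/
def IsBiclique {V : Type*} (G : SimpleGraph V) (B : Set V) : Prop :=
  IsCompleteBipartiteSet G B ∧
    ∀ B' : Set V, IsCompleteBipartiteSet G B' → B ⊆ B' → B' = B

/-- A vertex set that is a star: a center `c` adjacent to all other vertices of the set,
which are nonempty and pairwise non-adjacent (shape `K_{1,r}`, `r ≥ 1`). -/
def IsStarSet {V : Type*} (G : SimpleGraph V) (B : Set V) : Prop :=
  ∃ c ∈ B, (B \ {c}).Nonempty ∧ (∀ w ∈ B, w ≠ c → G.Adj c w) ∧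
    (∀ w ∈ B, ∀ z ∈ B, w ≠ c → z ≠ c → ¬ G.Adj w z)

/-- A graph is false-twin-free if no two distinct vertices have equal open neighborhoods. -/
def FalseTwinFree {V : Type*} (G : SimpleGraph V) : Prop :=
  ∀ u v : V, G.neighborSet u = G.neighborSet v → u = v

lemma nbr_singleton {V : Type*} [Fintype V] (G : SimpleGraph V) [DecidableRel G.Adj]
    {x y : V} (hd : G.degree x = 1) (h : G.Adj x y) : G.neighborFinset x = {y} := by
  obtain ⟨a, ha⟩ := Finset.card_eq_one.mp hd
  have hy : y ∈ G.neighborFinset x := by simpa using h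
  rw [ha] at hy
  rw [ha, Finset.mem_singleton.mp hy]

lemma closed_reach {V : Type*} (G : SimpleGraph V) (S : Set V)
    (hS : ∀ x ∈ S, ∀ y, G.Adj x y → y ∈ S) :
    ∀ {a b : V}, a ∈ S → G.Reachable a b → b ∈ S := by
  intro a b ha hr
  obtain ⟨p⟩ := hr
  induction p with
  | nil => exact ha
  | cons h q ih => exact ih (hS _ ha _ h)

lemma aux_side {V : Type*} [Fintype V] (G : SimpleGraph V) [DecidableRel G.Adj]
    (htf : FalseTwinFree G) {u v w : V} (huv : u ≠ v) (hvw : v ≠ w)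
    (hv : G.degree v = 1) (hNu : G.neighborFinset u = {w})
    {X Y : Set V} (hXY : ∀ x ∈ X, ∀ y ∈ Y, G.Adj x y)
    (hYne : Y.Nonempty) (huX : u ∈ X) (hvB : v ∈ X ∪ Y) : False := by
  have hYw : ∀ y ∈ Y, y = w := by
    intro y hy
    have h := hXY u huX y hy
    have : y ∈ G.neighborFinset u := by simpa using h
    rw [hNu] at this
    exact Finset.mem_singleton.mp this
  obtain ⟨y0, hy0⟩ := hYne
  have hwY : w ∈ Y := (hYw y0 hy0) ▸ hy0
  rcases hvB with hvX | hvY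
  · have hadj : G.Adj v w := hXY v hvX w hwY
    have hNv : G.neighborFinset v = {w} := nbr_singleton G hv hadj
    have : G.neighborSet u = G.neighborSet v := by
      have := hNu.trans hNv.symm
      rwa [SimpleGraph.neighborFinset, SimpleGraph.neighborFinset,
        Set.toFinset_inj] at this
    exact huv (htf u v this)
  · exact hvw (hYw v hvY)

lemma not_mem_cbs {V : Type*} [Fintype V] (G : SimpleGraph V) [DecidableRel G.Adj]
    (hconn : G.Connected) (hn : 3 ≤ Fintype.card V) (htf : FalseTwinFree G)
    {u v : V} (huv : u ≠ v) (hu : G.degree u = 1) (hv : G.degree v = 1)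
    {B : Set V} (hB : IsCompleteBipartiteSet G B) (huB : u ∈ B) : v ∉ B := by
  classical
  intro hvB
  -- u has a unique neighbor w
  have hpos : 0 < G.degree u := by omega
  rw [SimpleGraph.degree_pos_iff_exists_adj] at hpos
  obtain ⟨w, hw⟩ := hpos
  have hNu : G.neighborFinset u = {w} := nbr_singleton G hu hw
  -- v ≠ w
  have hvw : v ≠ w := by
    intro h
    subst h
    have hNv : G.neighborFinset v = {u} := nbr_singleton G hv hw.symm
    have hclosed : ∀ x ∈ ({u, v} : Set V), ∀ y, G.Adj x y → y ∈ ({u, v} : Set V) := by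
      intro x hx y hxy
      rcases hx with h | h
      · subst h
        have : y ∈ G.neighborFinset x := by simpa using hxy
        rw [hNu] at this
        right; exact Finset.mem_singleton.mp this
      · simp only [Set.mem_singleton_iff] at h
        subst h
        have : y ∈ G.neighborFinset x := by simpa using hxy
        rw [hNv] at this
        left; exact Finset.mem_singleton.mp this
    have huniv : (Set.univ : Set V) ⊆ {u, v} := by
      intro z _
      exact closed_reach G _ hclosed (by left; rfl) (hconn.preconnected u z)
    have : Fintype.card V ≤ 2 := by
      have h1 : (Finset.univ : Finset V) ⊆ {u, v} := by
        intro z _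
        have := huniv (Set.mem_univ z)
        simpa using this
      calc Fintype.card V = (Finset.univ : Finset V).card := rfl
        _ ≤ ({u, v} : Finset V).card := Finset.card_le_card h1
        _ ≤ 2 := Finset.card_insert_le _ _ |>.trans (by simp)
    omega
  obtain ⟨X, Y, hX, hY, hdisj, hBXY, hXY, hXX, hYY⟩ := hB
  rw [hBXY] at huB hvB
  rcases huB with huX | huY
  · exact aux_side G htf huv hvw hv hNu hXY hY huX hvB
  · exact aux_side G htf huv hvw hv hNu
      (fun y hy x hx => (hXY x hx y hy).symm) hX huY hvB.symm

/-- In a connected false-twin-free graph different from K₂, two distinct degree-one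
vertices belong to different bicliques. -/
theorem degree_one_vertices_different_bicliques {V : Type*} [Fintype V]
    (G : SimpleGraph V) [DecidableRel G.Adj] (hconn : G.Connected)
    (hn : 3 ≤ Fintype.card V) (htf : FalseTwinFree G)
    (u v : V) (huv : u ≠ v) (hu : G.degree u = 1) (hv : G.degree v = 1) :
    ∃ B : Set V, IsBiclique G B ∧ u ∈ B ∧ v ∉ B := by
  have hpos : 0 < G.degree u := by omega
  rw [SimpleGraph.degree_pos_iff_exists_adj] at hpos
  obtain ⟨w, hw⟩ := hpos
  -- the set of complete bipartite sets containing u is nonempty (contains {u,w})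
  have hne : G.Adj u w := hw
  have huw : u ≠ w := G.ne_of_adj hne
  set S : Set (Set V) := {B | IsCompleteBipartiteSet G B ∧ u ∈ B} with hSdef
  have hS0 : ({u, w} : Set V) ∈ S := by
    constructor
    · exact ⟨{u}, {w}, ⟨u, rfl⟩, ⟨w, rfl⟩, by simpa using huw, rfl,
        by simp [hne], by simp, by simp⟩
    · left; rfl
  obtain ⟨B, hBS, hBmax⟩ := Set.Finite.exists_maximalFor (id : Set V → Set V) S
    (Set.toFinite S) ⟨_, hS0⟩
  refine ⟨B, ⟨hBS.1, ?_⟩, hBS.2, not_mem_cbs G hconn hn htf huv hu hv hBS.1 hBS.2⟩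
  intro B' hB' hsub
  exact Set.Subset.antisymm (hBmax ⟨hB', hsub hBS.2⟩ hsub) hsub
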